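/- Let Δ be an additive subgroup of ℂ and let A be the vector space with basis {x_α : α ∈ Δ}. Suppose ★ is a bilinear operation on A such that: (i) x_α★x_β − x_β★x_α = (β−α)x_{α+β} for all α,β ∈ Δ; (ii) [w★u, v] − [w★v, u] + [w,u]★v − [w,v]★u − w★[u,v] = 0 for all u,v,w ∈ A, where [u,v] := u★v − v★u; (iii) x₀★x₀ = 0; and (iv) for each α,β, x_α★x_β is a finite linear combination of basis elements (automatic). Then x_α★x_β = β x_{α+β} for all α,β ∈ Δ. -/

import Mathlib

open Finsupp

/-- Uniqueness: any bilinear operation ★ on the free space on Δ whose commutator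
is the Witt-type bracket, satisfying the Gel'fand–Dorfman compatibility with
its own commutator and x₀★x₀ = 0, is x_α★x_β = β x_{α+β}. -/
theorem stmt_19 (Δ : AddSubgroup ℂ)
    (star : (Δ →₀ ℂ) →ₗ[ℂ] (Δ →₀ ℂ) →ₗ[ℂ] (Δ →₀ ℂ))
    (hcomm : ∀ α β : Δ,
      star (single α 1) (single β 1) - star (single β 1) (single α 1) =
        ((β : ℂ) - (α : ℂ)) • single (α + β) 1)
    (hcompat : ∀ u v w : Δ →₀ ℂ,
      (star (star w u) v - star v (star w u)) -
      (star (star w v) u - star u (star w v)) +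
      star (star w u - star u w) v - star (star w v - star v w) u -
      star w (star u v - star v u) = 0)
    (h00 : star (single 0 1) (single 0 1) = 0) :
    ∀ α β : Δ, star (single α 1) (single β 1) = (β : ℂ) • single (α + β) 1 := by
  classical
  have hcoe : ∀ {u v : Δ}, (u : ℂ) = v → u = v := fun h => Subtype.ext h
  -- commutator with a basis vector, evaluated at a point
  have hbr : ∀ (p : Δ →₀ ℂ) (β ν : Δ),
      (star p (single β 1)) ν - (star (single β 1) p) ν
        = (2 * (β : ℂ) - ν) * p (ν - β) := by
    intro p β ν
    induction p using Finsupp.induction_linear with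
    | zero => simp
    | add p q hp hq =>
        simp only [map_add, LinearMap.add_apply, Finsupp.add_apply]
        linear_combination hp + hq
    | single μ c =>
        have hc := DFunLike.congr_fun (hcomm μ β) ν
        simp only [Finsupp.sub_apply, Finsupp.smul_apply, smul_eq_mul,
          Finsupp.single_apply] at hc
        have hs : (single μ c : Δ →₀ ℂ) = c • single μ 1 := by
          rw [Finsupp.smul_single, smul_eq_mul, mul_one]
        simp only [hs, map_smul, LinearMap.smul_apply, Finsupp.smul_apply, smul_eq_mul,
          Finsupp.single_apply]
        by_cases h : μ + β = ν
        · have h2 : ν - β = μ := by rw [← h, add_sub_cancel_right]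
          have hcast : (μ : ℂ) + β = ν := by
            have := congrArg (fun t : Δ => (t : ℂ)) h
            push_cast at this
            linear_combination this
          rw [if_pos h, if_pos h2.symm] at *
          linear_combination c * hc - c * hcast
        · have h2 : ¬(μ = ν - β) := fun h' => h (by rw [h', sub_add_cancel])
          rw [if_neg h, if_neg h2] at *
          linear_combination c * hc
  -- the master equation from hcompat
  have hS : ∀ γ α β ν : Δ,
      (2 * (β : ℂ) - ν) * (star (single γ 1) (single α 1)) (ν - β)
      - (2 * (α : ℂ) - ν) * (star (single γ 1) (single β 1)) (ν - α)
      + ((α : ℂ) - γ) * (star (single (γ + α) 1) (single β 1)) ν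
      - ((β : ℂ) - γ) * (star (single (γ + β) 1) (single α 1)) ν
      - ((β : ℂ) - α) * (star (single γ 1) (single (α + β) 1)) ν = 0 := by
    intro γ α β ν
    have H := hcompat (single α 1) (single β 1) (single γ 1)
    rw [hcomm γ α, hcomm γ β, hcomm α β] at H
    have H2 := DFunLike.congr_fun H ν
    simp only [map_smul, LinearMap.smul_apply, Finsupp.sub_apply, Finsupp.add_apply,
      Finsupp.smul_apply, smul_eq_mul, Finsupp.coe_zero, Pi.zero_apply] at H2
    have h1 := hbr (star (single γ 1) (single α 1)) β ν
    have h2 := hbr (star (single γ 1) (single β 1)) α ν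
    linear_combination H2 - h1 + h2
  -- F is the deviation from the expected answer
  set F : Δ → Δ → Δ → ℂ :=
    fun α β ν => (star (single α 1) (single β 1)) ν
      - (β : ℂ) * (if (α + β : Δ) = ν then 1 else 0) with hFdef
  have hFval : ∀ α β ν : Δ, (star (single α 1) (single β 1)) ν
      = F α β ν + (β : ℂ) * (if (α + β : Δ) = ν then 1 else 0) := by
    intro α β ν; simp [hFdef]
  have hdelta : ∀ γ α β ν : Δ,
      (if (γ + α + β : Δ) = ν then (1:ℂ) else 0) * ((ν : ℂ) - ((γ:ℂ) + α + β)) = 0 := by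
    intro γ α β ν
    split
    · rename_i h; rw [← h]; push_cast; ring
    · ring
  have hEF : ∀ γ α β ν : Δ,
      (2 * (β : ℂ) - ν) * F γ α (ν - β)
      - (2 * (α : ℂ) - ν) * F γ β (ν - α)
      + ((α : ℂ) - γ) * F (γ + α) β ν
      - ((β : ℂ) - γ) * F (γ + β) α ν
      - ((β : ℂ) - α) * F γ (α + β) ν = 0 := by
    intro γ α β ν
    have h := hS γ α β ν
    rw [hFval γ α (ν - β), hFval γ β (ν - α), hFval (γ + α) β ν,
        hFval (γ + β) α ν, hFval γ (α + β) ν] at h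
    simp only [eq_sub_iff_add_eq] at h
    simp only [show (γ + β + α : Δ) = γ + α + β from by abel,
      show (γ + (α + β) : Δ) = γ + α + β from by abel] at h
    push_cast at h
    linear_combination h - ((β : ℂ) - α) * hdelta γ α β ν
  have hFsym : ∀ α β ν : Δ, F α β ν = F β α ν := by
    intro α β ν
    have h := DFunLike.congr_fun (hcomm α β) ν
    simp only [Finsupp.sub_apply, Finsupp.smul_apply, smul_eq_mul,
      Finsupp.single_apply] at h
    simp only [hFdef]
    simp only [show (β + α : Δ) = α + β from add_comm β α]
    linear_combination h
  have hF00 : ∀ ν : Δ, F 0 0 ν = 0 := by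
    intro ν; simp [hFdef, h00]
  have hF0 : ∀ α ν : Δ, ν ≠ α + α → F 0 α ν = 0 := by
    intro α ν hν
    have h := hEF 0 α 0 ν
    simp only [zero_add, add_zero, sub_zero, ZeroMemClass.coe_zero] at h
    rw [hF00 (ν - α), hFsym α 0 ν] at h
    have key : (2 * (α : ℂ) - ν) * F 0 α ν = 0 := by linear_combination h
    rcases mul_eq_zero.mp key with h' | h'
    · exact absurd (hcoe (by push_cast; linear_combination -h')) hν
    · exact h'
  -- λ(α) := F 0 α (α+α) vanishes
  have hL : ∀ α : Δ, F 0 α (α + α) = 0 := by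
    intro α
    by_cases hα : α = 0
    · subst hα; exact hF00 (0 + 0)
    · have ha : (α : ℂ) ≠ 0 := fun hh => hα (hcoe (by simpa using hh))
      have ne1 : (α + α + α + α : Δ) ≠ (α + α + α) + (α + α + α) := by
        intro h
        apply ha
        have := congrArg (fun t : Δ => (t : ℂ)) h
        push_cast at this
        linear_combination -this / 2
      have ne2 : (α + α + α + α + α : Δ) ≠ (α + (α + α + α)) + (α + (α + α + α)) := by
        intro h
        apply ha
        have := congrArg (fun t : Δ => (t : ℂ)) h
        push_cast at this
        linear_combination -this / 3
      have h1 := hEF 0 α (α + α + α) (α + α + α + α + α)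
      simp only [zero_add] at h1
      rw [show (α + α + α + α + α - (α + α + α) : Δ) = α + α from by abel,
          show (α + α + α + α + α - α : Δ) = α + α + α + α from by abel,
          hF0 (α + α + α) (α + α + α + α) ne1,
          hF0 (α + (α + α + α)) (α + α + α + α + α) ne2,
          hFsym (α + α + α) α (α + α + α + α + α)] at h1
      push_cast at h1
      have h2 := hEF α (α + α + α) 0 (α + α + α + α + α)
      simp only [sub_zero, add_zero, ZeroMemClass.coe_zero] at h2
      rw [show (α + α + α + α + α - (α + α + α) : Δ) = α + α from by abel,
          hFsym α 0 (α + α),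
          hFsym (α + (α + α + α)) 0 (α + α + α + α + α),
          hF0 (α + (α + α + α)) (α + α + α + α + α) ne2] at h2
      push_cast at h2
      set L := F 0 α (α + α) with hLd
      set Fx := F α (α + α + α) (α + α + α + α + α) with hFxd
      have q1 : (α : ℂ) * (L - 2 * Fx) = 0 := by linear_combination h1
      have q2 : (α : ℂ) * (Fx + L) = 0 := by linear_combination -h2
      have e1 := (mul_eq_zero.mp q1).resolve_left ha
      have e2 := (mul_eq_zero.mp q2).resolve_left ha
      linear_combination (e1 + 2 * e2) / 3
  have hF0all : ∀ α ν : Δ, F 0 α ν = 0 := by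
    intro α ν
    by_cases h : ν = α + α
    · rw [h]; exact hL α
    · exact hF0 α ν h
  have hoff : ∀ α β ν : Δ, α ≠ β → F α β ν = 0 := by
    intro α β ν hαβ
    have h := hEF 0 α β ν
    simp only [zero_add, ZeroMemClass.coe_zero] at h
    rw [hF0all α (ν - β), hF0all β (ν - α), hF0all (α + β) ν, hFsym β α ν] at h
    have key : ((α : ℂ) - β) * F α β ν = 0 := by linear_combination h
    rcases mul_eq_zero.mp key with h' | h'
    · exact absurd (hcoe (by linear_combination h')) hαβ
    · exact h'
  have hdiagsupp : ∀ γ α ν : Δ, ν ≠ γ + α → F γ α ν = 0 := by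
    intro γ α ν hν
    have h := hEF γ α 0 ν
    simp only [sub_zero, add_zero, ZeroMemClass.coe_zero] at h
    rw [hFsym γ 0 (ν - α), hFsym (γ + α) 0 ν, hF0all γ (ν - α), hF0all (γ + α) ν] at h
    have key : (((γ : ℂ) + α) - ν) * F γ α ν = 0 := by linear_combination h
    rcases mul_eq_zero.mp key with h' | h'
    · exact absurd (hcoe (by push_cast; linear_combination -h')) hν
    · exact h'
  have hdiag : ∀ α : Δ, F α α (α + α) = 0 := by
    intro α
    by_cases hα : α = 0
    · subst hα; exact hF0all 0 (0 + 0)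
    · have ha : (α : ℂ) ≠ 0 := fun hh => hα (hcoe (by simpa using hh))
      have hne3 : (α : Δ) ≠ α + α + α := by
        intro h
        apply ha
        have := congrArg (fun t : Δ => (t : ℂ)) h
        push_cast at this
        linear_combination -this / 2
      have hne2 : (α + α : Δ) ≠ α + α + α := by
        intro h
        apply ha
        have := congrArg (fun t : Δ => (t : ℂ)) h
        push_cast at this
        linear_combination -this
      have hne4 : (α + (α + α + α) : Δ) ≠ α := by
        intro h
        apply ha
        have := congrArg (fun t : Δ => (t : ℂ)) h
        push_cast at this
        linear_combination this / 3
      have hne4' : (α : Δ) ≠ α + (α + α + α) := fun h => hne4 h.symm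
      have h := hEF α α (α + α + α) (α + α + α + α + α)
      rw [show (α + α + α + α + α - (α + α + α) : Δ) = α + α from by abel,
          show (α + α + α + α + α - α : Δ) = α + α + α + α from by abel,
          hoff α (α + α + α) (α + α + α + α) hne3,
          hoff (α + α) (α + α + α) (α + α + α + α + α) hne2,
          hoff (α + (α + α + α)) α (α + α + α + α + α) hne4,
          hoff α (α + (α + α + α)) (α + α + α + α + α) hne4'] at h
      push_cast at h
      have key : (α : ℂ) * F α α (α + α) = 0 := by linear_combination h
      exact (mul_eq_zero.mp key).resolve_left ha
  have hFall : ∀ α β ν : Δ, F α β ν = 0 := by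
    intro α β ν
    by_cases h : α = β
    · subst h
      by_cases h2 : ν = α + α
      · rw [h2]; exact hdiag α
      · exact hdiagsupp α α ν h2
    · exact hoff α β ν h
  intro α β
  ext ν
  have h := hFall α β ν
  simp only [hFdef] at h
  rw [Finsupp.smul_apply, Finsupp.single_apply, smul_eq_mul]
  linear_combination h
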